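/- For every positive integer ℓ ≥ 2, the almost complete tree F(ℓ) maximizes the security among all proper binary trees with ℓ leaves: for every proper binary tree T with ℓ leaves, R(T) ≤ R(F(ℓ)). -/

import Mathlib

/-- Proper binary trees: every internal vertex has exactly two children. -/
inductive BTree : Type
  | leaf : BTree
  | node : BTree → BTree → BTree
  deriving DecidableEq

namespace BTree

/-- The rank (protection number) of the root of a proper binary tree:
the minimum distance from the root to a leaf descendant. -/
def rank : BTree → ℕ
  | leaf => 0
  | node l r => min l.rank r.rank + 1

/-- The security of a proper binary tree: the sum of the ranks of all vertices. -/
def security : BTree → ℕ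
  | leaf => 0
  | node l r => (node l r).rank + l.security + r.security

/-- The number of leaves. -/
def leafCount : BTree → ℕ
  | leaf => 1
  | node l r => l.leafCount + r.leafCount

/-- The height: maximum distance from the root to a leaf. -/
def height : BTree → ℕ
  | leaf => 0
  | node l r => max l.height r.height + 1

/-- A tree is complete if all leaves are at the same depth. -/
def IsComplete : BTree → Prop
  | leaf => True
  | node l r => IsComplete l ∧ IsComplete r ∧ l.height = r.height

/-- The subtree at a given position (a list of directions from the root;
`false` = first child, `true` = second child), if the position exists. -/
def subtreeAt : BTree → List Bool → Option BTree
  | t, [] => some t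
  | leaf, _ :: _ => none
  | node l _, false :: p => subtreeAt l p
  | node _ r, true :: p => subtreeAt r p

/-- Replace the subtree at a given position by `s`. -/
def replaceAt : BTree → List Bool → BTree → BTree
  | _, [], s => s
  | leaf, _ :: _, _ => leaf
  | node l r, false :: p, s => node (replaceAt l p s) r
  | node l r, true :: p, s => node l (replaceAt r p s)

/-- The rank of the vertex at position `p` in `T` (rank of a vertex only depends
on the subtree consisting of the vertex and its descendants). -/
def rankAt (T : BTree) (p : List Bool) : ℕ := ((T.subtreeAt p).map rank).getD 0

/-- The vertex at position `p` in `T` is saturated: its subtree is complete, but the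
subtree of none of its (proper) ancestors is complete. -/
def Saturated (T : BTree) (p : List Bool) : Prop :=
  (∃ s, T.subtreeAt p = some s ∧ IsComplete s) ∧
  ∀ q s, q <+: p → q ≠ p → T.subtreeAt q = some s → ¬ IsComplete s

/-- The complete binary tree of height `m` (with `2 ^ m` leaves). -/
def completeTree : ℕ → BTree
  | 0 => leaf
  | m + 1 => node (completeTree m) (completeTree m)

/-- The tree `T_L` for `L = (n₁, …, n_k)`: a binary caterpillar whose spine vertices carry
complete binary trees with `2 ^ nᵢ` leaves. -/
def TL : List ℕ → BTree
  | [] => leaf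
  | n :: ns => ns.foldl (fun acc m => node acc (completeTree m)) (completeTree n)

/-- Helper for the almost complete tree: a complete binary tree of height `m`
whose leftmost `r` leaves each receive two leaf children. -/
def buildF : ℕ → ℕ → BTree
  | 0, r => if r = 0 then leaf else node leaf leaf
  | m + 1, r => node (buildF m (min r (2 ^ m))) (buildF m (r - 2 ^ m))

/-- The almost complete ("good") tree `F(ℓ)` on `ℓ` leaves. -/
def F (ℓ : ℕ) : BTree := buildF (Nat.log 2 ℓ) (ℓ - 2 ^ Nat.log 2 ℓ)

end BTree


def s2 : ℕ → ℕ
  | 0 => 0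
  | n+1 => s2 ((n+1)/2) + (n+1) % 2
decreasing_by simp_wf; omega

lemma s2_succ (n : ℕ) : s2 (n+1) = s2 ((n+1)/2) + (n+1) % 2 := by rw [s2]

lemma s2_two_mul (n : ℕ) : s2 (2*n) = s2 n := by
  cases n with
  | zero => rfl
  | succ k =>
    have h : 2*(k+1) = (2*k+1)+1 := by omega
    rw [h, s2_succ]
    have h1 : (2*k+1+1)/2 = k+1 := by omega
    have h2 : (2*k+1+1)%2 = 0 := by omega
    rw [h1, h2]; ring

lemma s2_two_mul_add_one (n : ℕ) : s2 (2*n+1) = s2 n + 1 := by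
  rw [s2_succ]
  have h1 : (2*n+1)/2 = n := by omega
  have h2 : (2*n+1)%2 = 1 := by omega
  rw [h1, h2]

lemma s2_zero : s2 0 = 0 := by rw [s2]

lemma s2_pow_add : ∀ m r : ℕ, r < 2^m → s2 (2^m + r) = s2 r + 1 := by
  intro m
  induction m with
  | zero =>
    intro r hr
    interval_cases r
    rw [show (2:ℕ)^0 + 0 = 1 from rfl, s2_succ]
  | succ m ih =>
    intro r hr
    have hp : (2:ℕ)^(m+1) = 2*2^m := by ring
    rcases Nat.even_or_odd r with ⟨r', rfl⟩ | ⟨r', rfl⟩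
    · have h1 : 2^(m+1) + (r'+r') = 2*(2^m + r') := by omega
      rw [h1, s2_two_mul, show r'+r' = 2*r' from by omega, s2_two_mul]
      exact ih r' (by omega)
    · have h1 : 2^(m+1) + (2*r'+1) = 2*(2^m + r') + 1 := by omega
      rw [h1, s2_two_mul_add_one, s2_two_mul_add_one]
      have := ih r' (by omega)
      omega

lemma s2_pow (m : ℕ) : s2 (2^m) = 1 := by
  have := s2_pow_add m 0 (Nat.pow_pos (n := m) (by norm_num))
  simpa [s2_zero] using this

lemma log2_two_mul (n : ℕ) (hn : 1 ≤ n) : Nat.log 2 (2*n) = Nat.log 2 n + 1 := by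
  rw [mul_comm]; exact Nat.log_mul_base one_lt_two (by omega)

lemma log2_two_mul_add_one (n : ℕ) (hn : 1 ≤ n) : Nat.log 2 (2*n+1) = Nat.log 2 n + 1 := by
  apply Nat.log_eq_of_pow_le_of_lt_pow
  · have h1 : 2^(Nat.log 2 n) ≤ n := Nat.pow_log_le_self 2 (by omega)
    have hp : (2:ℕ)^(Nat.log 2 n + 1) = 2*2^(Nat.log 2 n) := by ring
    omega
  · have h2 : n < 2^(Nat.log 2 n + 1) := Nat.lt_pow_succ_log_self one_lt_two n
    have hp : (2:ℕ)^(Nat.log 2 n + 1 + 1) = 2*2^(Nat.log 2 n + 1) := by ring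
    omega


lemma s2_one : s2 1 = 1 := by
  have h := s2_succ 0
  norm_num at h
  rw [h, s2_zero]

lemma s2_two : s2 2 = 1 := by
  rw [show (2:ℕ) = 2*1 from rfl, s2_two_mul, s2_one]

lemma log2_two : Nat.log 2 2 = 1 := by
  have := log2_two_mul 1 le_rfl
  simpa using this

lemma L1 : ∀ n : ℕ, 1 ≤ n → s2 (n+1) + Nat.log 2 (n+1) ≤ s2 n + Nat.log 2 n + 1 := by
  intro n
  induction n using Nat.strong_induction_on with
  | _ n ih =>
    intro hn
    rcases Nat.even_or_odd n with ⟨m, rfl⟩ | ⟨m, rfl⟩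
    · -- n = m + m, m ≥ 1
      have hm : 1 ≤ m := by omega
      have h1 : m + m = 2*m := by omega
      rw [h1, s2_two_mul, s2_two_mul_add_one, log2_two_mul m hm, log2_two_mul_add_one m hm]
      omega
    · -- n = 2m+1
      rcases Nat.eq_zero_or_pos m with rfl | hm
      · simp only [show 2*0+1+1 = 2 from by norm_num, show 2*0+1 = 1 from by norm_num]
        rw [s2_one, s2_two, log2_two, Nat.log_one_right]
      · have h1 : 2*m+1+1 = 2*(m+1) := by omega
        rw [h1, s2_two_mul, s2_two_mul_add_one, log2_two_mul (m+1) (by omega), log2_two_mul_add_one m hm]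
        have := ih m (by omega) hm
        omega

lemma K : ∀ n a b : ℕ, a + b ≤ n → 1 ≤ a → 1 ≤ b →
    s2 (a+b) + Nat.log 2 (a+b) ≤ s2 a + s2 b + max (Nat.log 2 a) (Nat.log 2 b) := by
  intro n
  induction n using Nat.strong_induction_on with
  | _ n ih =>
    intro a b hab ha hb
    rcases Nat.even_or_odd a with ⟨a', rfl⟩ | ⟨a', rfl⟩ <;>
      rcases Nat.even_or_odd b with ⟨b', rfl⟩ | ⟨b', rfl⟩
    · -- both even
      have ha' : 1 ≤ a' := by omega
      have hb' : 1 ≤ b' := by omega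
      have h1 : a' + a' + (b' + b') = 2*(a'+b') := by omega
      rw [h1, show a'+a' = 2*a' from by omega, show b'+b' = 2*b' from by omega,
        s2_two_mul, s2_two_mul, s2_two_mul, log2_two_mul a' ha', log2_two_mul b' hb',
        log2_two_mul (a'+b') (by omega)]
      have := ih (a'+b') (by omega) a' b' (le_refl _) ha' hb'
      omega
    · -- a even, b = 2b'+1
      have ha' : 1 ≤ a' := by omega
      rcases Nat.eq_zero_or_pos b' with rfl | hb'
      · -- b = 1
        have h1 : a' + a' + (2*0+1) = 2*a'+1 := by omega
        rw [h1, show a'+a' = 2*a' from by omega, s2_two_mul, s2_two_mul_add_one,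
          log2_two_mul a' ha', log2_two_mul_add_one a' ha',
          show 2*0+1 = 1 from rfl, s2_one, Nat.log_one_right]
        omega
      · have h1 : a' + a' + (2*b'+1) = 2*(a'+b')+1 := by omega
        rw [h1, show a'+a' = 2*a' from by omega, s2_two_mul, s2_two_mul_add_one,
          s2_two_mul_add_one, log2_two_mul a' ha', log2_two_mul_add_one b' hb',
          log2_two_mul_add_one (a'+b') (by omega)]
        have := ih (a'+b') (by omega) a' b' (le_refl _) ha' hb'
        omega
    · -- a = 2a'+1, b even
      have hb' : 1 ≤ b' := by omega
      rcases Nat.eq_zero_or_pos a' with rfl | ha'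
      · have h1 : (2*0+1) + (b'+b') = 2*b'+1 := by omega
        rw [h1, show b'+b' = 2*b' from by omega, s2_two_mul, s2_two_mul_add_one,
          log2_two_mul b' hb', log2_two_mul_add_one b' hb',
          show 2*0+1 = 1 from rfl, s2_one, Nat.log_one_right]
        omega
      · have h1 : (2*a'+1) + (b'+b') = 2*(a'+b')+1 := by omega
        rw [h1, show b'+b' = 2*b' from by omega, s2_two_mul, s2_two_mul_add_one,
          s2_two_mul_add_one, log2_two_mul b' hb', log2_two_mul_add_one a' ha',
          log2_two_mul_add_one (a'+b') (by omega)]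
        have := ih (a'+b') (by omega) a' b' (le_refl _) ha' hb'
        omega
    · -- both odd
      have h1 : (2*a'+1) + (2*b'+1) = 2*(a'+b'+1) := by omega
      rw [h1, s2_two_mul, s2_two_mul_add_one, s2_two_mul_add_one,
        log2_two_mul (a'+b'+1) (by omega)]
      rcases Nat.eq_zero_or_pos a' with rfl | ha'
      · rcases Nat.eq_zero_or_pos b' with rfl | hb'
        · simp only [show (0:ℕ)+0+1 = 1 from rfl, show 2*0+1 = 1 from rfl]
          rw [s2_one, s2_zero, Nat.log_one_right]
          omega
        · rw [log2_two_mul_add_one b' hb']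
          have hL := L1 b' hb'
          simp only [Nat.zero_add, Nat.log_one_right, show 2*0+1 = 1 from rfl, s2_zero]
          omega
      · rcases Nat.eq_zero_or_pos b' with rfl | hb'
        · rw [log2_two_mul_add_one a' ha']
          have hL := L1 a' ha'
          have h2 : a' + 0 + 1 = a' + 1 := by omega
          rw [h2]
          simp only [Nat.log_one_right, show 2*0+1 = 1 from rfl, s2_zero]
          omega
        · rw [log2_two_mul_add_one a' ha', log2_two_mul_add_one b' hb']
          have hL := L1 (a'+b') (by omega)
          have := ih (a'+b') (by omega) a' b' (le_refl _) ha' hb'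
          omega

open BTree

lemma leafCount_pos : ∀ T : BTree, 1 ≤ T.leafCount := by
  intro T
  induction T with
  | leaf => exact le_refl 1
  | node l r ihl ihr => simp only [leafCount]; omega

lemma pow_rank_le : ∀ T : BTree, 2 ^ T.rank ≤ T.leafCount := by
  intro T
  induction T with
  | leaf => exact le_refl 1
  | node l r ihl ihr =>
    simp only [rank, leafCount, pow_succ]
    have h1 : 2 ^ min l.rank r.rank ≤ 2 ^ l.rank := Nat.pow_le_pow_right (by norm_num) (min_le_left _ _)
    have h2 : 2 ^ min l.rank r.rank ≤ 2 ^ r.rank := Nat.pow_le_pow_right (by norm_num) (min_le_right _ _)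
    omega

lemma rank_le_log (T : BTree) : T.rank ≤ Nat.log 2 T.leafCount := by
  have h := leafCount_pos T
  exact (Nat.le_log_iff_pow_le one_lt_two (by omega)).mpr (pow_rank_le T)

lemma rank_buildF : ∀ m r : ℕ, r ≤ 2^m → (buildF m r).rank = if r = 2^m then m+1 else m := by
  intro m
  induction m with
  | zero =>
    intro r hr
    interval_cases r <;> norm_num [buildF, rank]
  | succ m ih =>
    intro r hr
    have hp : (2:ℕ)^(m+1) = 2*2^m := by ring
    have hpos : 0 < (2:ℕ)^m := Nat.pow_pos (n := m) (by norm_num)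
    have hA : min r (2^m) ≤ 2^m := min_le_right _ _
    have hB : r - 2^m ≤ 2^m := by omega
    have h1 := ih (min r (2^m)) hA
    have h2 := ih (r - 2^m) hB
    have e : (buildF (m+1) r).rank
        = min (buildF m (min r (2^m))).rank (buildF m (r - 2^m)).rank + 1 := rfl
    rw [e, h1, h2]
    split_ifs <;> omega

lemma security_buildF : ∀ m r : ℕ, r ≤ 2^m →
    (buildF m r).security + m + 2 + s2 r = 2^(m+1) + 2*r := by
  intro m
  induction m with
  | zero =>
    intro r hr
    interval_cases r
    · norm_num [buildF, security, s2_zero]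
    · have : (buildF 0 1).security = 1 := rfl
      rw [this, s2_one]
      norm_num
  | succ m ih =>
    intro r hr
    have hp : (2:ℕ)^(m+1) = 2*2^m := by ring
    have hp2 : (2:ℕ)^(m+2) = 2*2^(m+1) := by ring
    have hpos : 0 < (2:ℕ)^m := Nat.pow_pos (n := m) (by norm_num)
    have hA : min r (2^m) ≤ 2^m := min_le_right _ _
    have hB : r - 2^m ≤ 2^m := by omega
    have IA := ih (min r (2^m)) hA
    have IB := ih (r - 2^m) hB
    have hrank := rank_buildF (m+1) r hr
    have hsec : (buildF (m+1) r).security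
        = (buildF (m+1) r).rank + (buildF m (min r (2^m))).security
          + (buildF m (r - 2^m)).security := rfl
    rcases le_or_gt r (2^m) with hc | hc
    · have e1 : min r (2^m) = r := min_eq_left hc
      have e2 : r - 2^m = 0 := by omega
      rw [e1] at IA
      rw [e2] at IB
      have hif : (buildF (m+1) r).rank = m+1 := by
        rw [hrank, if_neg (by omega)]
      rw [hsec, hif, e1, e2]
      have h0 : s2 0 = 0 := s2_zero
      omega
    · have e1 : min r (2^m) = 2^m := min_eq_right (le_of_lt hc)
      rw [e1] at IA
      have hsA : s2 (2^m) = 1 := s2_pow m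
      rcases eq_or_lt_of_le hr with he | hlt2
      · have e2 : r - 2^m = 2^m := by omega
        rw [e2] at IB
        have hif : (buildF (m+1) r).rank = m+2 := by
          rw [hrank, if_pos he]
        have hs2r : s2 r = 1 := by rw [he]; exact s2_pow (m+1)
        rw [hsec, hif, e1, e2]
        omega
      · have hBlt : r - 2^m < 2^m := by omega
        have hs2r : s2 r = s2 (r - 2^m) + 1 := by
          have h := s2_pow_add m (r - 2^m) hBlt
          rwa [show 2^m + (r - 2^m) = r from by omega] at h
        have hif : (buildF (m+1) r).rank = m+1 := by
          rw [hrank, if_neg (by omega)]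
        rw [hsec, hif, e1]
        omega

lemma security_F_eq (n : ℕ) (hn : 1 ≤ n) :
    (F n).security + Nat.log 2 n + s2 n + 1 = 2*n := by
  have h1 : 2^(Nat.log 2 n) ≤ n := Nat.pow_log_le_self 2 (by omega)
  have h2 : n < 2^(Nat.log 2 n + 1) := Nat.lt_pow_succ_log_self one_lt_two n
  have hp : (2:ℕ)^(Nat.log 2 n + 1) = 2*2^(Nat.log 2 n) := by ring
  have hr : n - 2^(Nat.log 2 n) < 2^(Nat.log 2 n) := by omega
  have hs := security_buildF (Nat.log 2 n) (n - 2^(Nat.log 2 n)) (le_of_lt hr)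
  have hd : s2 n = s2 (n - 2^(Nat.log 2 n)) + 1 := by
    have h := s2_pow_add (Nat.log 2 n) (n - 2^(Nat.log 2 n)) hr
    rwa [show 2^(Nat.log 2 n) + (n - 2^(Nat.log 2 n)) = n from by omega] at h
  have hF : F n = buildF (Nat.log 2 n) (n - 2^(Nat.log 2 n)) := rfl
  rw [hF]
  omega

lemma star (a b : ℕ) (ha : 1 ≤ a) (hb : 1 ≤ b) :
    min (Nat.log 2 a) (Nat.log 2 b) + 1 + (F a).security + (F b).security
      ≤ (F (a+b)).security := by
  have hK := K (a+b) a b (le_refl _) ha hb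
  have ia := security_F_eq a ha
  have ib := security_F_eq b hb
  have iab := security_F_eq (a+b) (by omega)
  omega

lemma security_le_F (T : BTree) : T.security ≤ (F T.leafCount).security := by
  induction T with
  | leaf => exact Nat.zero_le _
  | node l r ihl ihr =>
    have hl := leafCount_pos l
    have hr := leafCount_pos r
    have h1 := rank_le_log l
    have h2 := rank_le_log r
    have hstar := star l.leafCount r.leafCount hl hr
    have e : (node l r).security = min l.rank r.rank + 1 + l.security + r.security := rfl
    have e2 : (node l r).leafCount = l.leafCount + r.leafCount := rfl
    rw [e, e2]
    omega

open BTree in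
/-- For every integer `ℓ ≥ 2`, the almost complete tree `F(ℓ)` maximizes the security among
all proper binary trees with `ℓ` leaves. -/
theorem security_le_security_F (ℓ : ℕ) (hℓ : 2 ≤ ℓ) (T : BTree) (hT : T.leafCount = ℓ) :
    T.security ≤ (F ℓ).security := by
  rw [← hT]
  exact security_le_F T
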